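/- Let $h$ be a positive odd integer, $k,t$ positive integers with $t$ and $h$ relatively prime and $0 < t < h^k$, and let $x_0 = t/h^k$. Let $m$ be a real number such that for all integers $p,q$ and all nonnegative integers $r,s$, $m \neq \frac{q 2^{r-s} h^k}{p h^k - t 2^r}$ (whenever the denominator is nonzero). Then the line $y = m(x - x_0)$ contains no point of the form $(a/2^c, b/2^d)$ with $a,b$ integers and $c,d$ nonnegative integers. -/

import Mathlib

theorem stmt0 (h k t : ℕ) (hh : Odd h) (hhpos : 0 < h) (hk : 0 < k) (ht : 0 < t)
    (hcop : Nat.Coprime t h) (htlt : t < h ^ k)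
    (x0 : ℝ) (hx0 : x0 = (t : ℝ) / (h : ℝ) ^ k)
    (m : ℝ)
    (hm : ∀ (p q : ℤ) (r s : ℕ), (p : ℝ) * (h : ℝ) ^ k - (t : ℝ) * 2 ^ r ≠ 0 →
      m ≠ (q : ℝ) * (2 : ℝ) ^ ((r : ℤ) - (s : ℤ)) * (h : ℝ) ^ k /
        ((p : ℝ) * (h : ℝ) ^ k - (t : ℝ) * 2 ^ r)) :
    ∀ (a b : ℤ) (c d : ℕ), (b : ℝ) / 2 ^ d ≠ m * ((a : ℝ) / 2 ^ c - x0) := by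
  intro a b c d heq
  have hhR : ((h : ℝ)) ^ k ≠ 0 := by positivity
  have h2c : (2 : ℝ) ^ c ≠ 0 := by positivity
  have h2d : (2 : ℝ) ^ d ≠ 0 := by positivity
  by_cases hD : (a : ℝ) * (h : ℝ) ^ k - (t : ℝ) * 2 ^ c = 0
  · -- then a * h^k = t * 2^c in ℤ, contradiction with h^k odd > 1 coprime to t
    have hZ : a * (h : ℤ) ^ k = (t : ℤ) * 2 ^ c := by
      have : (a : ℝ) * (h : ℝ) ^ k = (t : ℝ) * 2 ^ c := by linarith
      exact_mod_cast this
    have hdvd : ((h : ℤ) ^ k) ∣ (t : ℤ) * 2 ^ c := ⟨a, by linarith [hZ]⟩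
    have hcop1 : IsCoprime ((h : ℤ) ^ k) (t : ℤ) := by
      apply IsCoprime.pow_left
      rw [Int.isCoprime_iff_gcd_eq_one]
      simpa [Nat.coprime_comm] using hcop
    have hcop2 : IsCoprime ((h : ℤ) ^ k) ((2 : ℤ) ^ c) := by
      apply IsCoprime.pow
      rw [Int.isCoprime_iff_gcd_eq_one]
      rw [show ((2:ℤ)) = ((2:ℕ):ℤ) by norm_num, Int.gcd_natCast_natCast]
      exact hh.coprime_two_right
    have hdvd2 : ((h : ℤ) ^ k) ∣ (2 : ℤ) ^ c := hcop1.dvd_of_dvd_mul_right (by rwa [mul_comm] at hdvd)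
    have hunit : IsUnit ((h : ℤ) ^ k) := hcop2.isUnit_of_dvd' dvd_rfl hdvd2
    rw [Int.isUnit_iff] at hunit
    have hk1 : h ^ k = 1 := by
      rcases hunit with h1 | h1
      · exact_mod_cast h1
      · exfalso; have : (0:ℤ) ≤ (h:ℤ)^k := by positivity
        omega
    omega
  · apply hm a b c d hD
    have hsub : (a : ℝ) / 2 ^ c - x0 = ((a : ℝ) * (h : ℝ) ^ k - (t : ℝ) * 2 ^ c) / (2 ^ c * (h : ℝ) ^ k) := by
      rw [hx0]; field_simp
    have hne : (a : ℝ) / 2 ^ c - x0 ≠ 0 := by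
      rw [hsub]
      exact div_ne_zero hD (by positivity)
    have hm' : m = ((b : ℝ) / 2 ^ d) / ((a : ℝ) / 2 ^ c - x0) :=
      ((div_eq_iff hne).mpr heq).symm
    rw [hm', hsub]
    rw [zpow_sub₀ (by norm_num : (2:ℝ) ≠ 0)]
    field_simp
    simp only [zpow_natCast]
    ring
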